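/- Let U_i ⊂ r_i S^{n-1} (i ∈ [j]) be finite sets, each admitting positive coefficients summing the vectors to 0, and suppose that for some c ∈ R^n the maximum over all choices u^i ∈ U_i of ‖u^1 + ... + u^j − c‖_2 equals √(r_1² + ... + r_j²). Then c = 0, j ≤ n, and U_k ⊥ U_l (every vector of U_k is orthogonal to every vector of U_l) for all 1 ≤ k < l ≤ j. -/

import Mathlib

open Finset

private lemma avg_lemma {n : ℕ} (T : Finset (EuclideanSpace ℝ (Fin n)))
    (μ : EuclideanSpace ℝ (Fin n) → ℝ)
    (h1 : ∑ u ∈ T, μ u = 1) (h0 : ∑ u ∈ T, μ u • u = 0)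
    (ρ : ℝ) (hρ : ∀ u ∈ T, ‖u‖ = ρ) (a : EuclideanSpace ℝ (Fin n)) :
    ∑ u ∈ T, μ u * ‖u + a‖ ^ 2 = ρ ^ 2 + ‖a‖ ^ 2 := by
  have expand : ∀ u ∈ T, μ u * ‖u + a‖ ^ 2
      = μ u * ρ ^ 2 + μ u * (inner ℝ u a : ℝ) * 2 + μ u * ‖a‖ ^ 2 := by
    intro u hu
    rw [norm_add_sq_real, hρ u hu]; ring
  rw [Finset.sum_congr rfl expand, Finset.sum_add_distrib, Finset.sum_add_distrib,
    ← Finset.sum_mul, ← Finset.sum_mul, ← Finset.sum_mul, h1]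
  have hz : ∑ u ∈ T, μ u * (inner ℝ u a : ℝ) = 0 := by
    have : ∑ u ∈ T, μ u * (inner ℝ u a : ℝ) = (inner ℝ (∑ u ∈ T, μ u • u) a : ℝ) := by
      rw [sum_inner]
      exact Finset.sum_congr rfl fun u hu => (real_inner_smul_left u a (μ u)).symm
    rw [this, h0, inner_zero_left]
  rw [hz]; ring

theorem additive_colourful_caratheodory_equality_case {n j : ℕ}
    (U : Fin j → Finset (EuclideanSpace ℝ (Fin n))) (r : Fin j → ℝ)
    (hr : ∀ i, 0 < r i)
    (hne : ∀ i, (U i).Nonempty)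
    (hnorm : ∀ i, ∀ u ∈ U i, ‖u‖ = r i)
    (lam : Fin j → EuclideanSpace ℝ (Fin n) → ℝ)
    (hlam : ∀ i, ∀ u ∈ U i, 0 < lam i u)
    (hzero : ∀ i, ∑ u ∈ U i, lam i u • u = 0)
    (c : EuclideanSpace ℝ (Fin n))
    (hmax : IsGreatest
      {x : ℝ | ∃ sel : Fin j → EuclideanSpace ℝ (Fin n),
        (∀ i, sel i ∈ U i) ∧ x = ‖(∑ i, sel i) - c‖}
      (Real.sqrt (∑ i, (r i) ^ 2))) :
    c = 0 ∧ j ≤ n ∧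
      ∀ k l : Fin j, k < l →
        ∀ u ∈ U k, ∀ v ∈ U l, (inner ℝ u v : ℝ) = 0 := by
  set R : ℝ := ∑ i, (r i) ^ 2 with hRdef
  have hR0 : 0 ≤ R := Finset.sum_nonneg fun i _ => sq_nonneg _
  -- normalized weights
  set L : Fin j → ℝ := fun i => ∑ u ∈ U i, lam i u with hLdef
  have hL : ∀ i, 0 < L i := fun i =>
    Finset.sum_pos (fun u hu => hlam i u hu) (hne i)
  set μ : Fin j → EuclideanSpace ℝ (Fin n) → ℝ := fun i u => lam i u / L i with hμdef
  have hμpos : ∀ i, ∀ u ∈ U i, 0 < μ i u := fun i u hu =>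
    div_pos (hlam i u hu) (hL i)
  have hμ1 : ∀ i, ∑ u ∈ U i, μ i u = 1 := by
    intro i
    simp only [hμdef, ← Finset.sum_div]
    exact div_self (hL i).ne'
  have hμ0 : ∀ i, ∑ u ∈ U i, μ i u • u = 0 := by
    intro i
    have : ∀ u ∈ U i, μ i u • u = (L i)⁻¹ • (lam i u • u) := by
      intro u hu
      rw [smul_smul, hμdef]
      congr 1
      field_simp
    rw [Finset.sum_congr rfl this, ← Finset.smul_sum, hzero, smul_zero]
  -- upper bound on squared norms
  have hub : ∀ sel : Fin j → EuclideanSpace ℝ (Fin n), (∀ i, sel i ∈ U i) →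
      ‖(∑ i, sel i) - c‖ ^ 2 ≤ R := by
    intro sel hsel
    have h := hmax.2 ⟨sel, hsel, rfl⟩
    calc ‖(∑ i, sel i) - c‖ ^ 2 ≤ (Real.sqrt R) ^ 2 :=
          pow_le_pow_left₀ (norm_nonneg _) h 2
      _ = R := Real.sq_sqrt hR0
  -- Lemma U
  have LemU : ∀ s : Finset (Fin j), ∀ sel : Fin j → EuclideanSpace ℝ (Fin n),
      (∀ i, sel i ∈ U i) →
      ‖(∑ i ∈ sᶜ, sel i) - c‖ ^ 2 ≤ R - ∑ i ∈ s, (r i) ^ 2 := by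
    intro s
    induction s using Finset.induction_on with
    | empty =>
      intro sel hsel
      simpa using hub sel hsel
    | insert a s ha IH =>
      intro sel hsel
      set b : EuclideanSpace ℝ (Fin n) := (∑ i ∈ (insert a s)ᶜ, sel i) - c with hbdef
      have key : ∀ u ∈ U a, ‖u + b‖ ^ 2 ≤ R - ∑ i ∈ s, (r i) ^ 2 := by
        intro u hu
        have hsel' : ∀ i, Function.update sel a u i ∈ U i := by
          intro i
          rcases eq_or_ne i a with rfl | h
          · simpa using hu
          · simpa [Function.update_of_ne h] using hsel i
        have h := IH (Function.update sel a u) hsel'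
        have hmem : a ∈ sᶜ := Finset.mem_compl.2 ha
        have hsum : ∑ i ∈ sᶜ, Function.update sel a u i
            = u + ∑ i ∈ (insert a s)ᶜ, sel i := by
          rw [← Finset.add_sum_erase _ _ hmem, Function.update_self, Finset.compl_insert]
          congr 1
          exact Finset.sum_congr rfl fun i hi =>
            Function.update_of_ne (Finset.ne_of_mem_erase hi) _ _
        rw [hsum] at h
        rw [hbdef, ← add_sub_assoc]
        exact h
      have havg : ∑ u ∈ U a, μ a u * ‖u + b‖ ^ 2 = (r a) ^ 2 + ‖b‖ ^ 2 :=
        avg_lemma (U a) (μ a) (hμ1 a) (hμ0 a) (r a) (hnorm a) b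
      have hle : ∑ u ∈ U a, μ a u * ‖u + b‖ ^ 2
          ≤ R - ∑ i ∈ s, (r i) ^ 2 := by
        calc ∑ u ∈ U a, μ a u * ‖u + b‖ ^ 2
            ≤ ∑ u ∈ U a, μ a u * (R - ∑ i ∈ s, (r i) ^ 2) :=
              Finset.sum_le_sum fun u hu =>
                mul_le_mul_of_nonneg_left (key u hu) (hμpos a u hu).le
          _ = R - ∑ i ∈ s, (r i) ^ 2 := by rw [← Finset.sum_mul, hμ1, one_mul]
      rw [Finset.sum_insert ha]
      rw [havg] at hle
      linarith
  -- c = 0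
  classical
  set sel₀ : Fin j → EuclideanSpace ℝ (Fin n) := fun i => (hne i).choose with hsel₀def
  have hsel₀ : ∀ i, sel₀ i ∈ U i := fun i => (hne i).choose_spec
  have hc : c = 0 := by
    have h := LemU Finset.univ sel₀ hsel₀
    simp only [Finset.compl_univ, Finset.sum_empty, zero_sub, norm_neg] at h
    have : ‖c‖ ^ 2 ≤ 0 := by simpa [hRdef] using h
    have hn : ‖c‖ = 0 := by nlinarith [norm_nonneg c, sq_nonneg ‖c‖]
    exact norm_eq_zero.1 hn
  subst hc
  -- equality lemma
  have LemE : ∀ t : Finset (Fin j), ∀ sel : Fin j → EuclideanSpace ℝ (Fin n),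
      (∀ i, sel i ∈ U i) →
      ‖∑ i ∈ t, sel i‖ ^ 2 = ∑ i ∈ t, (r i) ^ 2 := by
    intro t
    induction t using Finset.induction_on with
    | empty => intro sel hsel; simp
    | insert a t ha IH =>
      intro sel hsel
      set aS : EuclideanSpace ℝ (Fin n) := ∑ i ∈ t, sel i with haSdef
      set B : ℝ := ∑ i ∈ insert a t, (r i) ^ 2 with hBdef
      have hRB : R - ∑ i ∈ (insert a t)ᶜ, (r i) ^ 2 = B := by
        have := Finset.sum_add_sum_compl (insert a t) (fun i => (r i) ^ 2)
        rw [hBdef, hRdef]; linarith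
      have hBle : ∀ u ∈ U a, ‖u + aS‖ ^ 2 ≤ B := by
        intro u hu
        have hsel' : ∀ i, Function.update sel a u i ∈ U i := by
          intro i
          rcases eq_or_ne i a with rfl | h
          · simpa using hu
          · simpa [Function.update_of_ne h] using hsel i
        have h := LemU (insert a t)ᶜ (Function.update sel a u) hsel'
        rw [compl_compl] at h
        have hsum : ∑ i ∈ insert a t, Function.update sel a u i = u + aS := by
          rw [Finset.sum_insert ha, Function.update_self, haSdef]
          congr 1
          exact Finset.sum_congr rfl fun i hi =>
            Function.update_of_ne (by rintro rfl; exact ha hi) _ _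
        rw [hsum, sub_zero, hRB] at h
        exact h
      have havg : ∑ u ∈ U a, μ a u * ‖u + aS‖ ^ 2 = B := by
        rw [avg_lemma (U a) (μ a) (hμ1 a) (hμ0 a) (r a) (hnorm a) aS,
          IH sel hsel, hBdef, Finset.sum_insert ha]
      have hzero' : ∑ u ∈ U a, μ a u * (B - ‖u + aS‖ ^ 2) = 0 := by
        have : ∑ u ∈ U a, μ a u * (B - ‖u + aS‖ ^ 2)
            = (∑ u ∈ U a, μ a u) * B - ∑ u ∈ U a, μ a u * ‖u + aS‖ ^ 2 := by
          rw [Finset.sum_mul, ← Finset.sum_sub_distrib]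
          exact Finset.sum_congr rfl fun u hu => by ring
        rw [this, hμ1, one_mul, havg, sub_self]
      have heach := (Finset.sum_eq_zero_iff_of_nonneg
        (fun u hu => mul_nonneg (hμpos a u hu).le (by linarith [hBle u hu]))).1 hzero'
      have hsa := heach (sel a) (hsel a)
      have : B - ‖sel a + aS‖ ^ 2 = 0 := by
        rcases mul_eq_zero.1 hsa with h | h
        · exact absurd h (hμpos a (sel a) (hsel a)).ne'
        · exact h
      rw [Finset.sum_insert ha]
      linarith
  -- orthogonality
  have horth : ∀ k l : Fin j, k ≠ l →
      ∀ u ∈ U k, ∀ v ∈ U l, (inner ℝ u v : ℝ) = 0 := by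
    intro k l hkl u hu v hv
    set sel : Fin j → EuclideanSpace ℝ (Fin n) :=
      fun i => if i = k then u else if i = l then v else sel₀ i with hseldef
    have hsel : ∀ i, sel i ∈ U i := by
      intro i
      rcases eq_or_ne i k with rfl | hik
      · simpa [hseldef] using hu
      rcases eq_or_ne i l with rfl | hil
      · simpa [hseldef, hkl.symm, hik] using hv
      · simpa [hseldef, hik, hil] using hsel₀ i
    have h := LemE {k, l} sel hsel
    rw [Finset.sum_pair hkl, Finset.sum_pair hkl] at h
    have hk : sel k = u := by simp [hseldef]
    have hl : sel l = v := by simp [hseldef, hkl.symm]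
    rw [hk, hl] at h
    have hexp := norm_add_sq_real u v
    rw [hnorm k u hu, hnorm l v hv] at hexp
    linarith
  -- j ≤ n
  have hjn : j ≤ n := by
    have horthN : Orthonormal ℝ (fun i => (r i)⁻¹ • sel₀ i) := by
      constructor
      · intro i
        rw [norm_smul, Real.norm_eq_abs, abs_of_pos (inv_pos.2 (hr i)),
          hnorm i _ (hsel₀ i), inv_mul_cancel₀ (hr i).ne']
      · intro i i' hii'
        rw [real_inner_smul_left, real_inner_smul_right,
          horth i i' hii' _ (hsel₀ i) _ (hsel₀ i')]
        ring
    have := horthN.linearIndependent.fintype_card_le_finrank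
    simpa [finrank_euclideanSpace_fin] using this
  refine ⟨rfl, hjn, fun k l hkl u hu v hv => horth k l hkl.ne u hu v hv⟩
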